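/- Let d ≥ 1. There exists a countable family of open balls B_j = B_{r_j}(z_j) in ℂ^d (identified with ℝ^{2d}) with centers z_j and radii r_j such that: (1) the complement of the closed ball of radius 4 centered at 0 is contained in the union of the B_j; (2) |z_j| ≥ 4 and r_j ≤ 1/|z_j| for every j; and (3) there is a finite bound M such that every point of ℂ^d lies in at most M of the enlarged balls B_{4r_j}(z_j). -/

import Mathlib

open Metric

/-- Packing lemma: a `δ`-separated finite set in a closed ball of a finite-dimensional
real normed space has uniformly bounded cardinality. -/
lemma packing_lemma {E : Type*} [NormedAddCommGroup E] [NormedSpace ℝ E]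
    [FiniteDimensional ℝ E] (c : E) (R δ : ℝ) (hδ : 0 < δ) :
    ∃ N : ℕ, ∀ t : Finset E, (∀ x ∈ t, dist x c ≤ R) →
      (∀ x ∈ t, ∀ y ∈ t, x ≠ y → δ ≤ dist x y) → t.card ≤ N := by
  classical
  have htb : TotallyBounded (Metric.closedBall c R) :=
    (isCompact_closedBall c R).totallyBounded
  obtain ⟨u, hufin, hcov⟩ := totallyBounded_iff.mp htb (δ / 2) (by linarith)
  refine ⟨hufin.toFinset.card, fun t ht hsep => ?_⟩
  have hmem : ∀ x ∈ t, ∃ y, y ∈ hufin.toFinset ∧ x ∈ ball y (δ / 2) := by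
    intro x hx
    have hx' : x ∈ ⋃ y ∈ u, ball y (δ / 2) := hcov (mem_closedBall.mpr (ht x hx))
    simp only [Set.mem_iUnion, exists_prop] at hx'
    obtain ⟨y, hy, hxy⟩ := hx'
    exact ⟨y, hufin.mem_toFinset.mpr hy, hxy⟩
  choose f hf1 hf2 using hmem
  set g : E → E := fun x => if h : x ∈ t then f x h else c with hg
  refine Finset.card_le_card_of_injOn g ?_ ?_
  · intro x hx
    simp only [hg, dif_pos (show x ∈ t from hx)]
    exact hf1 x hx
  · intro x hx y hy hxy
    by_contra hne
    have hx' : x ∈ t := hx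
    have hy' : y ∈ t := hy
    have h1 : x ∈ ball (g x) (δ / 2) := by simp only [hg, dif_pos hx']; exact hf2 x hx'
    have h2 : y ∈ ball (g y) (δ / 2) := by simp only [hg, dif_pos hy']; exact hf2 y hy'
    rw [hxy] at h1
    rw [mem_ball] at h1 h2
    have : dist x y < δ := by
      calc dist x y ≤ dist x (g y) + dist y (g y) := dist_triangle_right _ _ _
        _ < δ / 2 + δ / 2 := by linarith
        _ = δ := by ring
    exact absurd (hsep x hx' y hy' hne) (not_le.mpr this)

/-- The main construction, done in an abstract finite-dimensional real normed space
with a unit vector. -/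
lemma ball_family_exists_aux {E : Type*} [NormedAddCommGroup E] [NormedSpace ℝ E]
    [FiniteDimensional ℝ E] (u : E) (hu : ‖u‖ = 1) :
    ∃ (z : ℕ → E) (r : ℕ → ℝ),
      (∀ w : E, 4 < ‖w‖ → ∃ j, w ∈ Metric.ball (z j) (r j)) ∧
      (∀ j, 0 < r j ∧ 4 ≤ ‖z j‖ ∧ r j ≤ 1 / ‖z j‖) ∧
      (∃ M : ℕ, ∀ (w : E) (s : Finset ℕ),
        (∀ j ∈ s, w ∈ Metric.ball (z j) (4 * r j)) → s.card ≤ M) := by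
  classical
  obtain ⟨N, hN⟩ := packing_lemma (0 : E) 6 (1 / 2) (by norm_num)
  -- The collection of "good" separated subsets of the region `{4 ≤ ‖x‖}`.
  set G : Set (Set E) := {S | (∀ x ∈ S, 4 ≤ ‖x‖) ∧
      ∀ x ∈ S, ∀ y ∈ S, x ≠ y → min (1 / ‖x‖) (1 / ‖y‖) ≤ dist x y} with hGdef
  have hchain : ∀ c ⊆ G, IsChain (· ⊆ ·) c → c.Nonempty →
      ∃ ub ∈ G, ∀ s ∈ c, s ⊆ ub := by
    intro c hcG hc _
    refine ⟨⋃₀ c, ⟨?_, ?_⟩, fun s hs => Set.subset_sUnion_of_mem hs⟩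
    · rintro x ⟨s, hs, hxs⟩
      exact (hcG hs).1 x hxs
    · rintro x ⟨s, hs, hxs⟩ y ⟨s', hs', hys'⟩ hxy
      rcases eq_or_ne s s' with rfl | hss'
      · exact (hcG hs).2 x hxs y hys' hxy
      · rcases hc hs hs' hss' with h | h
        · exact (hcG hs').2 x (h hxs) y hys' hxy
        · exact (hcG hs).2 x hxs y (h hys') hxy
  obtain ⟨S, -, hSmax⟩ := zorn_subset_nonempty G hchain ∅
    ⟨by intro x hx; exact absurd hx (Set.notMem_empty x),
     by intro x hx; exact absurd hx (Set.notMem_empty x)⟩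
  have hSG : S ∈ G := hSmax.1
  have hS4 : ∀ x ∈ S, 4 ≤ ‖x‖ := hSG.1
  have hSsep : ∀ x ∈ S, ∀ y ∈ S, x ≠ y → min (1 / ‖x‖) (1 / ‖y‖) ≤ dist x y := hSG.2
  -- Maximality gives the covering property.
  have hSnear : ∀ w : E, 4 ≤ ‖w‖ → ∃ x ∈ S, dist w x < min (1 / ‖w‖) (1 / ‖x‖) := by
    intro w hw
    by_contra h
    push_neg at h
    have hw0 : (0 : ℝ) < 1 / ‖w‖ := by positivity
    have hwS : w ∉ S := by
      intro hwS
      have := h w hwS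
      simp only [dist_self, min_self] at this
      linarith
    have hins : insert w S ∈ G := by
      constructor
      · rintro x (rfl | hx)
        · exact hw
        · exact hS4 x hx
      · rintro x (rfl | hx) y (rfl | hy) hxy
        · exact absurd rfl hxy
        · exact h y hy
        · rw [dist_comm, min_comm]; exact h x hx
        · exact hSsep x hx y hy hxy
    have hsub : insert w S ⊆ S := hSmax.2 hins (Set.subset_insert w S)
    exact hwS (hsub (Set.mem_insert w S))
  -- Each bounded piece of `S` is finite.
  have hfin : ∀ n : ℕ, (S ∩ Metric.closedBall 0 ((n : ℝ) + 1)).Finite := by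
    intro n
    obtain ⟨N', hN'⟩ := packing_lemma (0 : E) ((n : ℝ) + 1) (1 / ((n : ℝ) + 1))
      (by positivity)
    by_contra hinf
    have hinf' : (S ∩ Metric.closedBall 0 ((n : ℝ) + 1)).Infinite := hinf
    obtain ⟨t, htsub, htcard⟩ := hinf'.exists_subset_card_eq (N' + 1)
    have hle := hN' t (fun x hx => by
        have := (htsub hx).2
        simpa [dist_eq_norm] using mem_closedBall_zero_iff.mp this)
      (fun x hx y hy hxy => by
        have hxS := (htsub hx).1
        have hyS := (htsub hy).1
        have hxb : ‖x‖ ≤ (n : ℝ) + 1 := mem_closedBall_zero_iff.mp (htsub hx).2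
        have hyb : ‖y‖ ≤ (n : ℝ) + 1 := mem_closedBall_zero_iff.mp (htsub hy).2
        have hx0 : (0 : ℝ) < ‖x‖ := lt_of_lt_of_le (by norm_num) (hS4 x hxS)
        have hy0 : (0 : ℝ) < ‖y‖ := lt_of_lt_of_le (by norm_num) (hS4 y hyS)
        have h1 : 1 / ((n : ℝ) + 1) ≤ 1 / ‖x‖ := by
          apply one_div_le_one_div_of_le hx0 hxb
        have h2 : 1 / ((n : ℝ) + 1) ≤ 1 / ‖y‖ := by
          apply one_div_le_one_div_of_le hy0 hyb
        calc 1 / ((n : ℝ) + 1) ≤ min (1 / ‖x‖) (1 / ‖y‖) := le_min h1 h2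
          _ ≤ dist x y := hSsep x hxS y hyS hxy)
    omega
  -- `S` is countable.
  have hScount : S.Countable := by
    have hsub : S ⊆ ⋃ n : ℕ, (S ∩ Metric.closedBall 0 ((n : ℝ) + 1)) := by
      intro x hx
      obtain ⟨n, hn⟩ := exists_nat_ge ‖x‖
      exact Set.mem_iUnion.mpr ⟨n, hx, mem_closedBall_zero_iff.mpr (by linarith)⟩
    exact (Set.countable_iUnion fun n => (hfin n).countable).mono hsub
  -- `S` is infinite.
  have hSinf : S.Infinite := by
    have hnormp : ∀ n : ℕ, ‖((n : ℝ) + 5) • u‖ = (n : ℝ) + 5 := by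
      intro n
      rw [norm_smul, hu, mul_one, Real.norm_eq_abs, abs_of_pos (by positivity)]
    have key : ∀ n : ℕ, ∃ x ∈ S, dist (((n : ℝ) + 5) • u) x < 1 / 5 := by
      intro n
      obtain ⟨x, hxS, hxd⟩ := hSnear (((n : ℝ) + 5) • u) (by rw [hnormp]; linarith [n.cast_nonneg (α := ℝ)])
      refine ⟨x, hxS, lt_of_lt_of_le hxd ?_⟩
      calc min (1 / ‖((n : ℝ) + 5) • u‖) (1 / ‖x‖) ≤ 1 / ‖((n : ℝ) + 5) • u‖ :=
            min_le_left _ _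
        _ ≤ 1 / 5 := by
            rw [hnormp]
            apply one_div_le_one_div_of_le (by norm_num)
            linarith [n.cast_nonneg (α := ℝ)]
    choose f hfS hfd using key
    have hinj : Function.Injective f := by
      intro a b hab
      by_contra hne
      have h1 : dist (((a : ℝ) + 5) • u) (((b : ℝ) + 5) • u) = |(a : ℝ) - (b : ℝ)| := by
        rw [dist_eq_norm, ← sub_smul, norm_smul, hu, mul_one, Real.norm_eq_abs]
        ring_nf
      have h3 : 1 ≤ |(a : ℤ) - (b : ℤ)| := by
        have hne' : (a : ℤ) ≠ (b : ℤ) := by exact_mod_cast hne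
        exact Int.one_le_abs (sub_ne_zero.mpr hne')
      have h2 : (1 : ℝ) ≤ |(a : ℝ) - (b : ℝ)| := by
        have h4 : ((1 : ℤ) : ℝ) ≤ ((|(a : ℤ) - (b : ℤ)| : ℤ) : ℝ) := by exact_mod_cast h3
        rwa [Int.cast_abs, Int.cast_sub, Int.cast_natCast, Int.cast_natCast,
          Int.cast_one] at h4
      have htri : dist (((a : ℝ) + 5) • u) (((b : ℝ) + 5) • u)
          ≤ dist (((a : ℝ) + 5) • u) (f a) + dist (((b : ℝ) + 5) • u) (f b) := by
        rw [hab]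
        exact dist_triangle_right _ _ _
      have hfa := hfd a
      have hfb := hfd b
      rw [h1] at htri
      linarith
    exact Set.infinite_of_injective_forall_mem hinj hfS
  -- Enumerate `S`.
  have hc : Countable S := hScount.to_subtype
  have hi : Infinite S := hSinf.to_subtype
  obtain ⟨e⟩ : Nonempty (ℕ ≃ S) := nonempty_equiv_of_countable
  refine ⟨fun j => (e j : E), fun j => 1 / ‖(e j : E)‖, ?_, ?_, ?_⟩
  · -- covering
    intro w hw
    obtain ⟨x, hxS, hxd⟩ := hSnear w hw.le
    refine ⟨e.symm ⟨x, hxS⟩, ?_⟩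
    simp only [mem_ball, Equiv.apply_symm_apply]
    exact lt_of_lt_of_le hxd (min_le_right _ _)
  · -- basic properties
    intro j
    have h4 : 4 ≤ ‖(e j : E)‖ := hS4 _ (e j).2
    have h0 : (0 : ℝ) < ‖(e j : E)‖ := lt_of_lt_of_le (by norm_num) h4
    exact ⟨by positivity, h4, le_refl _⟩
  · -- bounded overlap
    refine ⟨N, fun w s hs => ?_⟩
    rcases s.eq_empty_or_nonempty with rfl | ⟨j₀, hj₀⟩
    · simp
    -- basic facts about each index in `s`
    have hfacts : ∀ j ∈ s, 4 ≤ ‖(e j : E)‖ ∧ dist w (e j : E) < 4 / ‖(e j : E)‖ := by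
      intro j hj
      have hb := hs j hj
      rw [mem_ball] at hb
      have h4 : 4 ≤ ‖(e j : E)‖ := hS4 _ (e j).2
      exact ⟨h4, by rw [mul_one_div] at hb; exact hb⟩
    have hw3 : 3 < ‖w‖ := by
      obtain ⟨h4, hd⟩ := hfacts j₀ hj₀
      have h0 : (0 : ℝ) < ‖(e j₀ : E)‖ := lt_of_lt_of_le (by norm_num) h4
      have hd1 : dist w (e j₀ : E) < 1 := by
        refine lt_of_lt_of_le hd ?_
        rw [div_le_one h0]; linarith
      have := norm_sub_norm_le (e j₀ : E) w
      rw [← dist_eq_norm, dist_comm] at this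
      linarith
    have hw0 : (0 : ℝ) < ‖w‖ := by linarith
    -- norms of centers are comparable to `‖w‖`, distances are `< 6 / ‖w‖`
    have hcomp : ∀ j ∈ s, ‖w‖ - 1 ≤ ‖(e j : E)‖ ∧ ‖(e j : E)‖ ≤ 2 * ‖w‖ ∧
        dist w (e j : E) < 6 / ‖w‖ := by
      intro j hj
      obtain ⟨h4, hd⟩ := hfacts j hj
      have h0 : (0 : ℝ) < ‖(e j : E)‖ := lt_of_lt_of_le (by norm_num) h4
      have hd1 : dist w (e j : E) < 1 := by
        refine lt_of_lt_of_le hd ?_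
        rw [div_le_one h0]; linarith
      have hlow : ‖w‖ - 1 ≤ ‖(e j : E)‖ := by
        have := norm_sub_norm_le w (e j : E)
        rw [← dist_eq_norm] at this
        linarith
      have hup : ‖(e j : E)‖ ≤ 2 * ‖w‖ := by
        have := norm_sub_norm_le (e j : E) w
        rw [← dist_eq_norm, dist_comm] at this
        linarith
      refine ⟨hlow, hup, ?_⟩
      have h23 : 2 / 3 * ‖w‖ ≤ ‖(e j : E)‖ := by linarith
      calc dist w (e j : E) < 4 / ‖(e j : E)‖ := hd
        _ ≤ 4 / (2 / 3 * ‖w‖) := by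
            apply div_le_div_of_nonneg_left (by norm_num) (by linarith) h23
        _ = 6 / ‖w‖ := by field_simp; ring
    -- rescale and apply the packing lemma
    set g : ℕ → E := fun j => ‖w‖ • ((e j : E) - w) with hgdef
    have hginj : Set.InjOn g ↑s := by
      intro a _ b _ hab
      have h1 : (e a : E) - w = (e b : E) - w :=
        smul_right_injective E (ne_of_gt hw0) hab
      have h2 : (e a : E) = (e b : E) := by
        have := congrArg (· + w) h1
        simpa using this
      exact e.injective (Subtype.ext h2)
    have hcard : (s.image g).card = s.card := Finset.card_image_of_injOn hginj
    rw [← hcard]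
    apply hN
    · intro x hx
      obtain ⟨j, hj, rfl⟩ := Finset.mem_image.mp hx
      obtain ⟨-, -, hd6⟩ := hcomp j hj
      have : dist (g j) 0 = ‖w‖ * dist w (e j : E) := by
        rw [dist_zero_right, hgdef, norm_smul, Real.norm_eq_abs, abs_of_pos hw0,
          ← dist_eq_norm, dist_comm]
      rw [this]
      have := mul_lt_mul_of_pos_left hd6 hw0
      rw [mul_div_cancel₀ 6 (ne_of_gt hw0)] at this
      linarith
    · intro x hx y hy hxy
      obtain ⟨a, ha, rfl⟩ := Finset.mem_image.mp hx
      obtain ⟨b, hb, rfl⟩ := Finset.mem_image.mp hy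
      have hab : (e a : E) ≠ (e b : E) := by
        intro h
        apply hxy
        rw [hgdef]
        simp [h]
      have habS : min (1 / ‖(e a : E)‖) (1 / ‖(e b : E)‖) ≤ dist (e a : E) (e b : E) :=
        hSsep _ (e a).2 _ (e b).2 hab
      obtain ⟨-, hua, -⟩ := hcomp a ha
      obtain ⟨-, hub, -⟩ := hcomp b hb
      have h0a : (0 : ℝ) < ‖(e a : E)‖ := lt_of_lt_of_le (by norm_num) (hS4 _ (e a).2)
      have h0b : (0 : ℝ) < ‖(e b : E)‖ := lt_of_lt_of_le (by norm_num) (hS4 _ (e b).2)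
      have hma : 1 / (2 * ‖w‖) ≤ 1 / ‖(e a : E)‖ := one_div_le_one_div_of_le h0a hua
      have hmb : 1 / (2 * ‖w‖) ≤ 1 / ‖(e b : E)‖ := one_div_le_one_div_of_le h0b hub
      have hsep2 : 1 / (2 * ‖w‖) ≤ dist (e a : E) (e b : E) :=
        le_trans (le_min hma hmb) habS
      have hdist : dist (g a) (g b) = ‖w‖ * dist (e a : E) (e b : E) := by
        rw [hgdef]
        simp only []
        rw [dist_eq_norm, ← smul_sub, sub_sub_sub_cancel_right, norm_smul,
          Real.norm_eq_abs, abs_of_pos hw0, ← dist_eq_norm]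
      rw [hdist]
      have := mul_le_mul_of_nonneg_left hsep2 (le_of_lt hw0)
      have heq : ‖w‖ * (1 / (2 * ‖w‖)) = 1 / 2 := by
        field_simp
      linarith

/-- There is a countable family of open balls `B_j = B_{r_j}(z_j)` in `ℂ^d`
covering the complement of the closed ball of radius `4`, with `|z_j| ≥ 4`, `r_j ≤ 1/|z_j|`,
and a finite bound on the number of overlapping enlarged balls `B_{4 r_j}(z_j)`. -/
theorem ball_family_exists (d : ℕ) (hd : 1 ≤ d) :
    ∃ (z : ℕ → EuclideanSpace ℂ (Fin d)) (r : ℕ → ℝ),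
      -- (1) the complement of the closed ball of radius 4 is covered
      (∀ w : EuclideanSpace ℂ (Fin d), 4 < ‖w‖ → ∃ j, w ∈ Metric.ball (z j) (r j)) ∧
      -- (2) centers far away, radii small
      (∀ j, 0 < r j ∧ 4 ≤ ‖z j‖ ∧ r j ≤ 1 / ‖z j‖) ∧
      -- (3) bounded overlap of the enlarged balls
      (∃ M : ℕ, ∀ (w : EuclideanSpace ℂ (Fin d)) (s : Finset ℕ),
        (∀ j ∈ s, w ∈ Metric.ball (z j) (4 * r j)) → s.card ≤ M) := by
  have hu : ‖EuclideanSpace.single (⟨0, hd⟩ : Fin d) (1 : ℂ)‖ = 1 := by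
    rw [EuclideanSpace.norm_single]
    simp
  exact ball_family_exists_aux _ hu
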